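/- Let r > 0 and let F, G : ℂ → ℂ be holomorphic on the open ball B(0, r), and suppose both are real on the real segment: Im F(x) = 0 and Im G(x) = 0 for every real x with |x| < r. Assume G'(0) ≠ 0 (under the hypotheses, F'(0) and G'(0) are real numbers). Then the ratio Im F(z)/Im G(z) converges to F'(0)/G'(0) as z → 0 with z in the open upper half-plane H = {z ∈ ℂ : Im z > 0}; that is, the limit along the filter of neighborhoods of 0 restricted to H exists and equals F'(0)/G'(0). -/

import Mathlib

open Filter Metric Complex

private lemma hasDerivAt_conj_conj_aux {f : ℂ → ℂ} {d z : ℂ}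
    (hf : HasDerivAt f d ((starRingEnd ℂ) z)) :
    HasDerivAt (fun w => (starRingEnd ℂ) (f ((starRingEnd ℂ) w))) ((starRingEnd ℂ) d) z := by
  rw [hasDerivAt_iff_tendsto] at hf ⊢
  have hc : Tendsto (fun w : ℂ => (starRingEnd ℂ) w) (nhds z) (nhds ((starRingEnd ℂ) z)) :=
    Complex.continuous_conj.tendsto z
  refine (hf.comp hc).congr fun x => ?_
  simp only [Function.comp]
  have h1 : (starRingEnd ℂ) x - (starRingEnd ℂ) z = (starRingEnd ℂ) (x - z) := (map_sub _ _ _).symm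
  have h2 : (starRingEnd ℂ) (f ((starRingEnd ℂ) x)) - (starRingEnd ℂ) (f ((starRingEnd ℂ) z))
      - (x - z) • (starRingEnd ℂ) d
      = (starRingEnd ℂ) (f ((starRingEnd ℂ) x) - f ((starRingEnd ℂ) z)
          - ((starRingEnd ℂ) x - (starRingEnd ℂ) z) • d) := by
    simp only [smul_eq_mul, map_sub, map_mul, Complex.conj_conj]
  rw [h1, h2, RCLike.norm_conj, RCLike.norm_conj, ← h1]

private lemma schwarz_reflect_aux {r : ℝ} (hr : 0 < r) {f : ℂ → ℂ}
    (hf : DifferentiableOn ℂ f (ball (0 : ℂ) r))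
    (hreal : ∀ x : ℝ, |x| < r → (f x).im = 0) :
    Set.EqOn (fun z => (starRingEnd ℂ) (f ((starRingEnd ℂ) z))) f (ball (0 : ℂ) r) := by
  have hball : ∀ z : ℂ, z ∈ ball (0 : ℂ) r → (starRingEnd ℂ) z ∈ ball (0 : ℂ) r := by
    intro z hz
    simpa [mem_ball_zero_iff] using mem_ball_zero_iff.1 hz
  have hfd : ∀ z ∈ ball (0 : ℂ) r, DifferentiableAt ℂ f z :=
    fun z hz => hf.differentiableAt (isOpen_ball.mem_nhds hz)
  have hh : DifferentiableOn ℂ (fun z => (starRingEnd ℂ) (f ((starRingEnd ℂ) z)))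
      (ball (0 : ℂ) r) := by
    intro z hz
    exact (hasDerivAt_conj_conj_aux
      ((hfd _ (hball z hz)).hasDerivAt)).differentiableAt.differentiableWithinAt
  have hfa : AnalyticOnNhd ℂ f (ball (0 : ℂ) r) := hf.analyticOnNhd isOpen_ball
  have hha : AnalyticOnNhd ℂ (fun z => (starRingEnd ℂ) (f ((starRingEnd ℂ) z)))
      (ball (0 : ℂ) r) := hh.analyticOnNhd isOpen_ball
  refine hha.eqOn_of_preconnected_of_frequently_eq hfa
    (convex_ball (0 : ℂ) r).isPreconnected (mem_ball_self hr) ?_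
  rw [Filter.frequently_iff]
  intro U hU
  obtain ⟨ε, hε, hsub⟩ := Metric.mem_nhdsWithin_iff.1 hU
  set t : ℝ := min ε r / 2 with ht
  have ht0 : 0 < t := by positivity
  have htε : t < ε := by
    have h := min_le_left ε r
    have : t ≤ ε / 2 := by rw [ht]; linarith
    linarith
  have htr : t < r := by
    have h := min_le_right ε r
    have : t ≤ r / 2 := by rw [ht]; linarith
    linarith
  refine ⟨(t : ℂ), hsub ⟨?_, ?_⟩, ?_⟩
  · rw [mem_ball_zero_iff]
    simpa [abs_of_pos ht0] using htε
  · simp only [Set.mem_compl_iff, Set.mem_singleton_iff]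
    exact_mod_cast ht0.ne'
  · have habs : |t| < r := by rwa [abs_of_pos ht0]
    have him := hreal t habs
    have : (starRingEnd ℂ) ((t : ℝ) : ℂ) = ((t : ℝ) : ℂ) := Complex.conj_ofReal t
    simp only [this]
    exact Complex.conj_eq_iff_im.2 him

private lemma deriv_im_zero_aux {r : ℝ} (hr : 0 < r) {f : ℂ → ℂ}
    (hf : DifferentiableOn ℂ f (ball (0 : ℂ) r))
    (hreal : ∀ x : ℝ, |x| < r → (f x).im = 0) :
    (deriv f 0).im = 0 := by
  have h0 : (0 : ℂ) ∈ ball (0 : ℂ) r := mem_ball_self hr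
  have heq := schwarz_reflect_aux hr hf hreal
  have hopen : ball (0 : ℂ) r ∈ nhds (0 : ℂ) := isOpen_ball.mem_nhds h0
  have hd : HasDerivAt f (deriv f 0) 0 := (hf.differentiableAt hopen).hasDerivAt
  have hd0 : HasDerivAt f (deriv f 0) ((starRingEnd ℂ) 0) := by simpa using hd
  have hdh : HasDerivAt (fun z => (starRingEnd ℂ) (f ((starRingEnd ℂ) z)))
      ((starRingEnd ℂ) (deriv f 0)) 0 := hasDerivAt_conj_conj_aux hd0
  have hev : (fun z => (starRingEnd ℂ) (f ((starRingEnd ℂ) z))) =ᶠ[nhds (0 : ℂ)] f :=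
    Filter.eventuallyEq_of_mem hopen heq
  have hdh' : HasDerivAt f ((starRingEnd ℂ) (deriv f 0)) 0 := by
    refine hdh.congr_of_eventuallyEq hev.symm
  have := hd.unique hdh'
  have him : (deriv f 0).im = -(deriv f 0).im := by
    conv_lhs => rw [this]
    simp
  linarith

private lemma tendsto_im_div_im_aux {r : ℝ} (hr : 0 < r) {f : ℂ → ℂ}
    (hf : DifferentiableOn ℂ f (ball (0 : ℂ) r))
    (hreal : ∀ x : ℝ, |x| < r → (f x).im = 0) :
    Tendsto (fun z : ℂ => (f z).im / z.im) (nhdsWithin 0 {z : ℂ | 0 < z.im})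
      (nhds (deriv f 0).re) := by
  set c : ℂ := deriv f 0 with hc
  have hcim : c.im = 0 := deriv_im_zero_aux hr hf hreal
  have hcre : c = ((c.re : ℝ) : ℂ) := by
    apply Complex.ext <;> simp [hcim]
  have heq := schwarz_reflect_aux hr hf hreal
  have hfd : ∀ z ∈ ball (0 : ℂ) r, DifferentiableAt ℂ f z :=
    fun z hz => hf.differentiableAt (isOpen_ball.mem_nhds hz)
  -- continuity of deriv f at 0
  have hderiv_cont : ContinuousAt (deriv f) 0 := by
    have := ((hf.analyticOnNhd isOpen_ball).deriv).continuousOn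
    exact (this.continuousAt (isOpen_ball.mem_nhds (mem_ball_self hr)))
  rw [Metric.tendsto_nhdsWithin_nhds]
  intro ε hε
  obtain ⟨δ₁, hδ₁, hδ₁'⟩ := Metric.tendsto_nhds_nhds.1 hderiv_cont (ε / 2) (by positivity)
  refine ⟨min δ₁ r, lt_min hδ₁ hr, ?_⟩
  intro z hz hdist
  have hzim : 0 < z.im := hz
  have hznorm : ‖z‖ < min δ₁ r := by simpa [Complex.dist_eq] using hdist
  have hzball : z ∈ ball (0 : ℂ) (min δ₁ r) := mem_ball_zero_iff.2 hznorm
  have hzconjball : (starRingEnd ℂ) z ∈ ball (0 : ℂ) (min δ₁ r) := by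
    rw [mem_ball_zero_iff]; simpa using hznorm
  have hsubball : ball (0 : ℂ) (min δ₁ r) ⊆ ball (0 : ℂ) r :=
    ball_subset_ball (min_le_right _ _)
  -- the auxiliary function g
  set g : ℂ → ℂ := fun w => f w - c * w with hg
  have hgderiv : ∀ w ∈ ball (0 : ℂ) (min δ₁ r),
      HasFDerivWithinAt g ((1 : ℂ →L[ℂ] ℂ).smulRight (deriv f w - c))
        (ball (0 : ℂ) (min δ₁ r)) w := by
    intro w hw
    have h1 : HasDerivAt f (deriv f w) w := (hfd w (hsubball hw)).hasDerivAt
    have h2 : HasDerivAt (fun w : ℂ => c * w) c w := by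
      simpa using (hasDerivAt_id w).const_mul c
    exact (h1.sub h2).hasFDerivAt.hasFDerivWithinAt
  have hgbound : ∀ w ∈ ball (0 : ℂ) (min δ₁ r),
      ‖(1 : ℂ →L[ℂ] ℂ).smulRight (deriv f w - c)‖ ≤ ε / 2 := by
    intro w hw
    rw [ContinuousLinearMap.norm_smulRight_apply, norm_one, one_mul]
    have : dist w 0 < δ₁ := lt_of_lt_of_le (mem_ball.1 hw) (min_le_left _ _)
    have := hδ₁' this
    rw [Complex.dist_eq] at this
    simpa using this.le
  have hmv := (convex_ball (0 : ℂ) (min δ₁ r)).norm_image_sub_le_of_norm_hasFDerivWithin_le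
    hgderiv hgbound hzconjball hzball
  -- compute both sides
  have hsym : f ((starRingEnd ℂ) z) = (starRingEnd ℂ) (f z) := by
    have := heq (hsubball hzball)
    simp only at this
    rw [← this, Complex.conj_conj]
  have hzsub : z - (starRingEnd ℂ) z = (2 * z.im : ℝ) * Complex.I := by
    simpa using Complex.sub_conj z
  have hfsub : f z - f ((starRingEnd ℂ) z) = (2 * (f z).im : ℝ) * Complex.I := by
    rw [hsym]
    simpa using Complex.sub_conj (f z)
  have hgz : g z - g ((starRingEnd ℂ) z)
      = (2 * ((f z).im - c.re * z.im) : ℝ) * Complex.I := by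
    have : g z - g ((starRingEnd ℂ) z)
        = (f z - f ((starRingEnd ℂ) z)) - c * (z - (starRingEnd ℂ) z) := by
      simp only [hg]; ring
    rw [this, hfsub, hzsub, hcre]
    push_cast
    simp only [Complex.ofReal_re]
    ring
  have hnorm1 : ‖g z - g ((starRingEnd ℂ) z)‖ = 2 * |(f z).im - c.re * z.im| := by
    rw [hgz]
    rw [norm_mul, Complex.norm_I, mul_one, Complex.norm_real]
    rw [Real.norm_eq_abs, abs_mul]
    norm_num
  have hnorm2 : ‖z - (starRingEnd ℂ) z‖ = 2 * z.im := by
    rw [hzsub, norm_mul, Complex.norm_I, mul_one, Complex.norm_real]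
    rw [Real.norm_eq_abs, abs_mul]
    rw [abs_of_pos hzim]
    norm_num
  rw [hnorm1, hnorm2] at hmv
  have hkey : |(f z).im - c.re * z.im| ≤ (ε / 2) * z.im := by nlinarith
  have : dist ((f z).im / z.im) c.re = |(f z).im - c.re * z.im| / z.im := by
    rw [Real.dist_eq]
    have h1 : (f z).im / z.im - c.re = ((f z).im - c.re * z.im) / z.im := by
      field_simp
    rw [h1, abs_div, abs_of_pos hzim]
  rw [this]
  calc |(f z).im - c.re * z.im| / z.im ≤ (ε / 2) * z.im / z.im := by gcongr
    _ = ε / 2 := mul_div_cancel_right₀ _ (ne_of_gt hzim)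
    _ < ε := by linarith

/-- Boundary limit of the ratio of two harmonic functions vanishing on a common boundary
segment: if `F, G` are holomorphic on `B(0,r)` and real on the real segment `(-r, r)`,
and `G'(0) ≠ 0`, then `Im F(z) / Im G(z) → F'(0)/G'(0)` as `z → 0` in the upper
half-plane (the derivatives being real numbers). -/
theorem tendsto_ratio_im_of_real_on_segment
    (r : ℝ) (hr : 0 < r) (F G : ℂ → ℂ)
    (hF : DifferentiableOn ℂ F (Metric.ball 0 r))
    (hG : DifferentiableOn ℂ G (Metric.ball 0 r))
    (hFreal : ∀ x : ℝ, |x| < r → (F x).im = 0)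
    (hGreal : ∀ x : ℝ, |x| < r → (G x).im = 0)
    (hG0 : deriv G 0 ≠ 0) :
    Tendsto (fun z : ℂ => (F z).im / (G z).im)
      (nhdsWithin (0 : ℂ) {z : ℂ | 0 < z.im})
      (nhds ((deriv F 0).re / (deriv G 0).re)) := by
  have hFt := tendsto_im_div_im_aux hr hF hFreal
  have hGt := tendsto_im_div_im_aux hr hG hGreal
  have hGim : (deriv G 0).im = 0 := deriv_im_zero_aux hr hG hGreal
  have hGre : (deriv G 0).re ≠ 0 := by
    intro h
    exact hG0 (Complex.ext (by simp [h]) (by simp [hGim]))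
  have hdiv := hFt.div hGt hGre
  refine hdiv.congr' ?_
  filter_upwards [self_mem_nhdsWithin] with z hz
  have hzim : z.im ≠ 0 := ne_of_gt hz
  rw [Pi.div_apply, div_div_div_cancel_right₀ hzim]
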